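/- For every odd integer n ≥ 1, ∫_0^1 |B_n(x)| dx = (2^{n+1} − 1) |B_{n+1}| / (2^{n-1} (n+1)); equivalently, ‖p_n‖_1 = (2^{n+1} − 1) |B_{n+1}| / (2^{n-1} (n+1) · n!). -/

import Mathlib

open MeasureTheory intervalIntegral

/-- The `n`-th Bernoulli polynomial, evaluated at a real number `x`. -/
noncomputable def bernPoly (n : ℕ) (x : ℝ) : ℝ :=
  Polynomial.aeval x (Polynomial.bernoulli n)

/-- The `n`-th Bernoulli number `B_n = B_n(0)`, as a real number. -/
noncomputable def bernNum (n : ℕ) : ℝ := (bernoulli n : ℝ)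

open Set

noncomputable def bP (n : ℕ) : Polynomial ℝ := (Polynomial.bernoulli n).map (algebraMap ℚ ℝ)

lemma bernPoly_eq (n : ℕ) (x : ℝ) : bernPoly n x = (bP n).eval x := by
  rw [bernPoly, bP, Polynomial.eval_map, Polynomial.aeval_def]

lemma continuous_bernPoly (n : ℕ) : Continuous (bernPoly n) := by
  have : bernPoly n = fun x => (bP n).eval x := funext (bernPoly_eq n)
  rw [this]; exact (bP n).continuous

lemma hasDerivAt_bernPoly (n : ℕ) (x : ℝ) :
    HasDerivAt (bernPoly (n + 1)) (((n : ℝ) + 1) * bernPoly n x) x := by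
  have h := (bP (n + 1)).hasDerivAt x
  have hd : (bP (n + 1)).derivative = Polynomial.C ((n : ℝ) + 1) * bP n := by
    rw [bP, Polynomial.derivative_map, Polynomial.derivative_bernoulli_add_one]
    push_cast
    rw [Polynomial.map_mul, bP]
    congr 1
    simp [Polynomial.map_add, Polynomial.map_natCast]
  rw [hd] at h
  simp only [Polynomial.eval_mul, Polynomial.eval_C] at h
  have := funext (bernPoly_eq (n+1))
  rw [show bernPoly (n+1) = fun x => (bP (n+1)).eval x from this, bernPoly_eq]
  exact h

lemma bernPoly_rat (n : ℕ) (q : ℚ) :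
    bernPoly n (q : ℝ) = (((Polynomial.bernoulli n).eval q : ℚ) : ℝ) := by
  rw [bernPoly, show ((q:ℝ)) = algebraMap ℚ ℝ q from rfl,
    Polynomial.aeval_algebraMap_apply_eq_algebraMap_eval]
  rfl

lemma bernPoly_zero_eval (n : ℕ) : bernPoly n 0 = (bernoulli n : ℝ) := by
  have := bernPoly_rat n 0
  simpa [Polynomial.bernoulli_eval_zero] using this

lemma bernPoly_one_eval (n : ℕ) (hn : n ≠ 1) : bernPoly n 1 = (bernoulli n : ℝ) := by
  have := bernPoly_rat n 1
  simp only [Rat.cast_one, Polynomial.bernoulli_eval_one] at this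
  rw [this, bernoulli_eq_bernoulli'_of_ne_one hn]

lemma bernPoly_zero' (x : ℝ) : bernPoly 0 x = 1 := by
  simp [bernPoly, Polynomial.bernoulli]

lemma bernPoly_one' (x : ℝ) : bernPoly 1 x = x - 1/2 := by
  simp [bernPoly, Polynomial.bernoulli, Finset.sum_range_succ]
  ring



lemma integral_bernPoly (n : ℕ) (a b : ℝ) :
    ∫ x in a..b, bernPoly n x = (bernPoly (n+1) b - bernPoly (n+1) a) / ((n:ℝ)+1) := by
  have hne : ((n:ℝ)+1) ≠ 0 := by positivity
  have hd : ∀ x ∈ uIcc a b, HasDerivAt (fun y => bernPoly (n+1) y / ((n:ℝ)+1)) (bernPoly n x) x := by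
    intro x _
    have := (hasDerivAt_bernPoly n x).div_const ((n:ℝ)+1)
    have h2 : ((n:ℝ)+1) * bernPoly n x / ((n:ℝ)+1) = bernPoly n x := by field_simp
    rwa [h2] at this
  rw [integral_eq_sub_of_hasDerivAt hd ((continuous_bernPoly n).intervalIntegrable a b)]
  ring

lemma integral_bernPoly_zero_one (n : ℕ) (hn : 1 ≤ n) :
    ∫ x in (0:ℝ)..1, bernPoly n x = 0 := by
  rw [integral_bernPoly, bernPoly_zero_eval, bernPoly_one_eval _ (by omega)]
  simp

lemma const_zero_helper (g : ℝ → ℝ) (b : ℝ) (hb : b ≠ 0) (hd : ∀ x, HasDerivAt g 0 x)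
    (hi : ∫ x in (0:ℝ)..b, g x = 0) : ∀ x, g x = 0 := by
  have hc : ∀ x, g x = g 0 := fun x =>
    is_const_of_deriv_eq_zero (fun y => (hd y).differentiableAt)
      (fun y => (hd y).deriv) x 0
  have : ∫ x in (0:ℝ)..b, g x = b * g 0 := by
    rw [intervalIntegral.integral_congr (g := fun _ => g 0) (fun x _ => hc x)]
    simp
  rw [this] at hi
  intro x; rw [hc x]
  rcases mul_eq_zero.1 hi with h | h
  · exact absurd h hb
  · exact h

lemma bernPoly_dup (n : ℕ) (x : ℝ) :
    2^n * (bernPoly n x + bernPoly n (x + 1/2)) = 2 * bernPoly n (2 * x) := by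
  induction n generalizing x with
  | zero => norm_num [bernPoly_zero']
  | succ n ih =>
    set g : ℝ → ℝ := fun x => 2^(n+1) * (bernPoly (n+1) x + bernPoly (n+1) (x + 1/2))
        - 2 * bernPoly (n+1) (2 * x) with hg
    have hd : ∀ y, HasDerivAt g 0 y := by
      intro y
      have h1 := hasDerivAt_bernPoly n y
      have h2 := (hasDerivAt_bernPoly n (y + 1/2)).comp y
        ((hasDerivAt_id y).add_const (1/2 : ℝ))
      have h3 := (hasDerivAt_bernPoly n (2 * y)).comp y
        ((hasDerivAt_id y).const_mul (2 : ℝ))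
      simp only [mul_one] at h2 h3
      have h4 := (((h1.add h2).const_mul ((2:ℝ)^(n+1))).sub (h3.const_mul 2))
      convert h4 using 1
      · rfl
      · rfl
      · rfl
      have hp : (2:ℝ)^(n+1) = 2^n * 2 := pow_succ 2 n
      rw [hp]
      linear_combination (-2*((n:ℝ)+1)) * ih y
    have i0 : IntervalIntegrable (fun y => bernPoly (n+1) y) volume 0 (1/2) :=
      (continuous_bernPoly (n+1)).intervalIntegrable _ _
    have i1 : IntervalIntegrable (fun y => bernPoly (n+1) (y + 1/2)) volume 0 (1/2) :=
      ((continuous_bernPoly (n+1)).comp (continuous_id.add continuous_const)).intervalIntegrable _ _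
    have i2 : IntervalIntegrable (fun y => bernPoly (n+1) (2 * y)) volume 0 (1/2) :=
      ((continuous_bernPoly (n+1)).comp (continuous_const.mul continuous_id)).intervalIntegrable _ _
    have hi : ∫ y in (0:ℝ)..(1/2), g y = 0 := by
      have e1 : (∫ y in (0:ℝ)..(1/2), (bernPoly (n+1) y + bernPoly (n+1) (y + 1/2)))
          = ∫ y in (0:ℝ)..1, bernPoly (n+1) y := by
        rw [intervalIntegral.integral_add i0 i1,
          intervalIntegral.integral_comp_add_right (fun y => bernPoly (n+1) y) (1/2),
          show (0:ℝ)+1/2 = 1/2 by norm_num, show (1/2:ℝ)+1/2 = 1 by norm_num,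
          intervalIntegral.integral_add_adjacent_intervals
            ((continuous_bernPoly (n+1)).intervalIntegrable 0 (1/2))
            ((continuous_bernPoly (n+1)).intervalIntegrable (1/2) 1)]
      have e2 : (∫ y in (0:ℝ)..(1/2), bernPoly (n+1) (2 * y))
          = (2:ℝ)⁻¹ * ∫ y in (0:ℝ)..1, bernPoly (n+1) y := by
        rw [intervalIntegral.integral_comp_mul_left (fun y => bernPoly (n+1) y) two_ne_zero]
        norm_num
      simp only [hg]
      rw [intervalIntegral.integral_sub ((i0.add i1).const_mul _) (i2.const_mul _),
        intervalIntegral.integral_const_mul, intervalIntegral.integral_const_mul, e1, e2,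
        integral_bernPoly_zero_one (n+1) (by omega)]
      ring
    have := const_zero_helper g (1/2) (by norm_num) hd hi x
    simp only [hg] at this
    linarith

lemma bernPoly_reflect (n : ℕ) (x : ℝ) :
    bernPoly n (1 - x) = (-1)^n * bernPoly n x := by
  induction n generalizing x with
  | zero => simp [bernPoly_zero']
  | succ n ih =>
    set g : ℝ → ℝ := fun x => bernPoly (n+1) (1 - x) - (-1)^(n+1) * bernPoly (n+1) x with hg
    have hd : ∀ y, HasDerivAt g 0 y := by
      intro y
      have h1 := (hasDerivAt_bernPoly n (1 - y)).comp y
        ((hasDerivAt_id y).const_sub (1:ℝ))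
      have h2 := (hasDerivAt_bernPoly n y).const_mul ((-1:ℝ)^(n+1))
      have h4 := h1.sub h2
      convert h4 using 1
      · rfl
      · rfl
      · rfl
      rw [pow_succ]
      linear_combination ((n:ℝ)+1) * ih y
    have i0 : IntervalIntegrable (fun y => bernPoly (n+1) y) volume 0 1 :=
      (continuous_bernPoly (n+1)).intervalIntegrable _ _
    have i1 : IntervalIntegrable (fun y => bernPoly (n+1) (1 - y)) volume 0 1 :=
      ((continuous_bernPoly (n+1)).comp (continuous_const.sub continuous_id)).intervalIntegrable _ _
    have hi : ∫ y in (0:ℝ)..1, g y = 0 := by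
      have e1 : (∫ y in (0:ℝ)..1, bernPoly (n+1) (1 - y)) = ∫ y in (0:ℝ)..1, bernPoly (n+1) y := by
        rw [intervalIntegral.integral_comp_sub_left (fun y => bernPoly (n+1) y) 1]
        norm_num
      simp only [hg]
      rw [intervalIntegral.integral_sub i1 (i0.const_mul _),
        intervalIntegral.integral_const_mul, e1, integral_bernPoly_zero_one (n+1) (by omega)]
      ring
    have := const_zero_helper g 1 one_ne_zero hd hi x
    simp only [hg] at this
    linarith

lemma bernPoly_half (n : ℕ) :
    2^n * bernPoly n (1/2 : ℝ) = (2 - 2^n) * (bernoulli n : ℝ) := by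
  have := bernPoly_dup n 0
  rw [mul_zero, bernPoly_zero_eval, zero_add] at this
  linarith [this]

lemma bernPoly_half' (n : ℕ) :
    bernPoly n (1/2 : ℝ) = (2 - 2^n) / 2^n * (bernoulli n : ℝ) := by
  have h := bernPoly_half n
  have h2 : (2:ℝ)^n ≠ 0 := by positivity
  field_simp
  linarith

lemma bernNum_odd_zero (m : ℕ) (h : Odd m) (h1 : 1 < m) : (bernoulli m : ℝ) = 0 := by
  rw [bernoulli_eq_bernoulli'_of_ne_one (by omega), bernoulli'_eq_zero_of_odd h h1]
  norm_num


lemma sign_step (k : ℕ)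
    (h : ∀ x ∈ Ioo (0:ℝ) (1/2), 0 < (-1:ℝ)^(k+1) * bernPoly (2*k+1) x) :
    ((-1:ℝ)^(k+1) * (bernoulli (2*k+2) : ℝ) < 0) ∧
    ∀ x ∈ Ioo (0:ℝ) (1/2), 0 < (-1:ℝ)^(k+2) * bernPoly (2*k+3) x := by
  set s : ℝ := (-1)^(k+1) with hsdef
  have hs2 : s * s = 1 := by
    rw [hsdef, ← pow_add]
    exact Even.neg_one_pow ⟨k+1, by ring⟩
  set g : ℝ → ℝ := fun x => s * bernPoly (2*k+2) x with hgdef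
  have gd : ∀ x, HasDerivAt g (s * (((2*k+1 : ℕ):ℝ)+1) * bernPoly (2*k+1) x) x := by
    intro x
    have := (hasDerivAt_bernPoly (2*k+1) x).const_mul s
    rw [show 2*k+1+1 = 2*k+2 from rfl] at this
    simpa [mul_assoc] using this
  have gcont : Continuous g := continuous_const.mul (continuous_bernPoly _)
  have gmono : StrictMonoOn g (Icc 0 (1/2)) := by
    apply strictMonoOn_of_deriv_pos (convex_Icc _ _) gcont.continuousOn
    intro x hx
    rw [interior_Icc] at hx
    rw [(gd x).deriv]
    have hpos := h x hx
    have hn1 : (0:ℝ) < ((2*k+1 : ℕ):ℝ)+1 := by positivity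
    nlinarith
  have g0 : g 0 = s * (bernoulli (2*k+2) : ℝ) := by rw [hgdef]; simp [bernPoly_zero_eval]
  set t : ℝ := (2 - 2^(2*k+2)) / 2^(2*k+2) with htdef
  have ght : g (1/2) = t * (s * (bernoulli (2*k+2) : ℝ)) := by
    show s * bernPoly (2*k+2) (1/2) = _
    rw [bernPoly_half']
    ring
  have ht_neg : t < 0 := by
    rw [htdef]
    apply div_neg_of_neg_of_pos _ (by positivity)
    have h4 : (4:ℝ) ≤ 2^(2*k+2) := by
      calc (4:ℝ) = 2^2 := by norm_num
      _ ≤ 2^(2*k+2) := by apply pow_le_pow_right₀ (by norm_num) (by omega)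
    linarith
  have hlt : g 0 < g (1/2) :=
    gmono (left_mem_Icc.2 (by norm_num)) (right_mem_Icc.2 (by norm_num)) (by norm_num)
  have ha_neg : s * (bernoulli (2*k+2) : ℝ) < 0 := by
    by_contra hcon
    push_neg at hcon
    have h1 : t * (s * (bernoulli (2*k+2) : ℝ)) ≤ 0 :=
      mul_nonpos_of_nonpos_of_nonneg (le_of_lt ht_neg) hcon
    rw [g0, ght] at hlt
    linarith
  refine ⟨ha_neg, ?_⟩
  have gh_pos : 0 < g (1/2) := by rw [ght]; exact mul_pos_of_neg_of_neg ht_neg ha_neg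
  have g0_neg : g 0 < 0 := by rw [g0]; exact ha_neg
  obtain ⟨c, hc, hgc⟩ : ∃ c ∈ Icc (0:ℝ) (1/2), g c = 0 := by
    have him := intermediate_value_Icc (by norm_num : (0:ℝ) ≤ 1/2) gcont.continuousOn
    have h0 : (0:ℝ) ∈ Icc (g 0) (g (1/2)) := ⟨le_of_lt g0_neg, le_of_lt gh_pos⟩
    obtain ⟨c, hc, hgc⟩ := him h0
    exact ⟨c, hc, hgc⟩
  have hc0 : (0:ℝ) < c := by
    rcases eq_or_lt_of_le hc.1 with h1 | h1
    · rw [← h1] at hgc; rw [hgc] at g0_neg; exact absurd g0_neg (lt_irrefl 0)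
    · exact h1
  have hch : c < 1/2 := by
    rcases eq_or_lt_of_le hc.2 with h1 | h1
    · rw [h1] at hgc; rw [hgc] at gh_pos; exact absurd gh_pos (lt_irrefl 0)
    · exact h1
  set f : ℝ → ℝ := fun x => (-s) * bernPoly (2*k+3) x with hfdef
  have fd : ∀ x, HasDerivAt f (-(((2*k+2 : ℕ):ℝ)+1) * g x) x := by
    intro x
    have h1 := (hasDerivAt_bernPoly (2*k+2) x).const_mul (-s)
    rw [show 2*k+2+1 = 2*k+3 from rfl] at h1
    have he : (-s) * ((((2*k+2 : ℕ):ℝ)+1) * bernPoly (2*k+2) x)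
        = -(((2*k+2 : ℕ):ℝ)+1) * g x := by rw [hgdef]; ring
    rwa [he] at h1
  have fcont : Continuous f := continuous_const.mul (continuous_bernPoly _)
  have hodd3 : (bernoulli (2*k+3) : ℝ) = 0 := bernNum_odd_zero _ ⟨k+1, by omega⟩ (by omega)
  have f0 : f 0 = 0 := by
    show (-s) * bernPoly (2*k+3) 0 = 0
    rw [bernPoly_zero_eval, hodd3, mul_zero]
  have fh : f (1/2) = 0 := by
    show (-s) * bernPoly (2*k+3) (1/2) = 0
    rw [bernPoly_half', hodd3, mul_zero, mul_zero]
  have fmono : StrictMonoOn f (Icc 0 c) := by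
    apply strictMonoOn_of_deriv_pos (convex_Icc _ _) fcont.continuousOn
    intro x hx
    rw [interior_Icc] at hx
    rw [(fd x).deriv]
    have hgx : g x < 0 := by
      have := gmono ⟨le_of_lt hx.1, le_of_lt (lt_trans hx.2 hch)⟩ hc hx.2
      rw [hgc] at this; exact this
    have hn1 : (0:ℝ) < ((2*k+2 : ℕ):ℝ)+1 := by positivity
    nlinarith
  have fanti : StrictAntiOn f (Icc c (1/2)) := by
    apply strictAntiOn_of_deriv_neg (convex_Icc _ _) fcont.continuousOn
    intro x hx
    rw [interior_Icc] at hx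
    rw [(fd x).deriv]
    have hgx : 0 < g x := by
      have := gmono hc ⟨le_of_lt (lt_trans hc0 hx.1), le_of_lt hx.2⟩ hx.1
      rw [hgc] at this; exact this
    have hn1 : (0:ℝ) < ((2*k+2 : ℕ):ℝ)+1 := by positivity
    nlinarith
  intro x hx
  have hkey : 0 < f x := by
    rcases le_or_gt x c with hxc | hxc
    · have := fmono (left_mem_Icc.2 (le_of_lt hc0)) ⟨le_of_lt hx.1, hxc⟩ hx.1
      rw [f0] at this; exact this
    · have := fanti ⟨le_of_lt hxc, le_of_lt hx.2⟩ (right_mem_Icc.2 (le_of_lt hch)) hx.2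
      rw [fh] at this; exact this
  have : (-1:ℝ)^(k+2) * bernPoly (2*k+3) x = f x := by
    show _ = (-s) * bernPoly (2*k+3) x
    rw [hsdef, pow_succ]
    ring
  rw [this]
  exact hkey

lemma oddSign : ∀ k : ℕ, ∀ x ∈ Ioo (0:ℝ) (1/2), 0 < (-1:ℝ)^(k+1) * bernPoly (2*k+1) x := by
  intro k
  induction k with
  | zero =>
    intro x hx
    rw [show 2*0+1 = 1 from rfl, bernPoly_one']
    simp only [pow_one]
    obtain ⟨_, h2⟩ := hx
    nlinarith
  | succ k ih =>
    have := (sign_step k ih).2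
    intro x hx
    have h2 := this x hx
    convert h2 using 3 <;> omega

lemma evenSign (k : ℕ) : (-1:ℝ)^(k+1) * (bernoulli (2*k+2) : ℝ) < 0 :=
  (sign_step k (oddSign k)).1

/-- For every odd `n ≥ 1`,
`∫_0^1 |B_n(x)| dx = (2^{n+1} − 1)|B_{n+1}| / (2^{n-1}(n+1))`; equivalently,
`‖p_n‖_1 = (2^{n+1} − 1)|B_{n+1}| / (2^{n-1}(n+1)·n!)` where `p_n(x) = B_n(x)/n!`. -/
theorem L1_norm_pB_odd (n : ℕ) (hn : 1 ≤ n) (hodd : Odd n) :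
    (∫ x in (0:ℝ)..1, |bernPoly n x|) =
        ((2:ℝ) ^ (n + 1) - 1) * |bernNum (n + 1)| / ((2:ℝ) ^ (n - 1) * (n + 1)) ∧
      (∫ x in (0:ℝ)..1, |bernPoly n x / (n.factorial : ℝ)|) =
        ((2:ℝ) ^ (n + 1) - 1) * |bernNum (n + 1)| /
          ((2:ℝ) ^ (n - 1) * (n + 1) * (n.factorial : ℝ)) := by
  obtain ⟨k, hk⟩ := hodd
  have hk' : n = 2*k+1 := by omega
  subst hk'
  set s : ℝ := (-1)^(k+1) with hsdef
  set B : ℝ := (bernoulli (2*k+2) : ℝ) with hBdef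
  have habs_s : |s| = 1 := by rw [hsdef, abs_pow, abs_neg, abs_one, one_pow]
  have hsB : s * B = -|B| := by
    have h1 := evenSign k
    rw [← hBdef] at h1
    have := abs_of_neg h1
    rw [abs_mul, habs_s, one_mul] at this
    linarith
  -- |B_n| = s * B_n on [0, 1/2]
  have habs_eq : ∀ x ∈ Icc (0:ℝ) (1/2), |bernPoly (2*k+1) x| = s * bernPoly (2*k+1) x := by
    intro x hx
    have hnn : 0 ≤ s * bernPoly (2*k+1) x := by
      rcases eq_or_lt_of_le hx.1 with h0 | h0
      · -- x = 0
        rw [← h0]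
        rcases Nat.eq_zero_or_pos k with hk0 | hk0
        · subst hk0; rw [show 2*0+1 = 1 from rfl, bernPoly_one']
          simp only [hsdef]; norm_num
        · rw [bernPoly_zero_eval, bernNum_odd_zero _ ⟨k, by omega⟩ (by omega), mul_zero]
      rcases eq_or_lt_of_le hx.2 with h2 | h2
      · -- x = 1/2
        rw [h2, bernPoly_half']
        rcases Nat.eq_zero_or_pos k with hk0 | hk0
        · subst hk0; norm_num
        · rw [bernNum_odd_zero _ ⟨k, by omega⟩ (by omega)]; ring_nf; rfl
      · exact le_of_lt (oddSign k x ⟨h0, h2⟩)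
    calc |bernPoly (2*k+1) x| = |s * bernPoly (2*k+1) x| := by rw [abs_mul, habs_s, one_mul]
    _ = s * bernPoly (2*k+1) x := abs_of_nonneg hnn
  -- first half integral
  have hA : (∫ x in (0:ℝ)..(1/2), |bernPoly (2*k+1) x|)
      = (2^(2*k+3) - 2)/2^(2*k+2) * |B| / ((2*k+1:ℕ)+1 : ℝ) := by
    rw [intervalIntegral.integral_congr (g := fun x => s * bernPoly (2*k+1) x)
      (fun x hx => habs_eq x (by rwa [uIcc_of_le (by norm_num : (0:ℝ) ≤ 1/2)] at hx))]
    rw [intervalIntegral.integral_const_mul, integral_bernPoly, bernPoly_zero_eval,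
      bernPoly_half']
    rw [show 2*k+1+1 = 2*k+2 from rfl, ← hBdef]
    rw [mul_div_assoc, ← mul_div_assoc s]
    have : s * ((2 - 2 ^ (2*k+2)) / 2 ^ (2*k+2) * B - B)
        = (2^(2*k+3) - 2)/2^(2*k+2) * |B| := by
      have hp : (2:ℝ)^(2*k+3) = 2 * 2^(2*k+2) := by rw [pow_succ]; ring
      have h2 : (2:ℝ)^(2*k+2) ≠ 0 := by positivity
      field_simp
      rw [hp]
      linear_combination ((2:ℝ) - 2*2^(2*k+2)) * hsB
    rw [this, mul_div_assoc]
  -- second half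
  have hB2 : (∫ x in (1/2:ℝ)..1, |bernPoly (2*k+1) x|)
      = ∫ x in (0:ℝ)..(1/2), |bernPoly (2*k+1) x| := by
    have e : ∀ x : ℝ, |bernPoly (2*k+1) x| = |bernPoly (2*k+1) (1 - x)| := by
      intro x
      rw [bernPoly_reflect, abs_mul, abs_pow, abs_neg, abs_one, one_pow, one_mul]
    rw [intervalIntegral.integral_congr (g := fun x => |bernPoly (2*k+1) (1 - x)|)
      (fun x _ => e x)]
    rw [intervalIntegral.integral_comp_sub_left (fun y => |bernPoly (2*k+1) y|) 1]
    norm_num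
  have hcont : Continuous fun x => |bernPoly (2*k+1) x| := (continuous_bernPoly _).abs
  have htot : (∫ x in (0:ℝ)..1, |bernPoly (2*k+1) x|)
      = 2 * ((2^(2*k+3) - 2)/2^(2*k+2) * |B| / ((2*k+1:ℕ)+1 : ℝ)) := by
    rw [← intervalIntegral.integral_add_adjacent_intervals
      (hcont.intervalIntegrable 0 (1/2)) (hcont.intervalIntegrable (1/2) 1),
      hB2, hA]
    ring
  have hfinal : (∫ x in (0:ℝ)..1, |bernPoly (2*k+1) x|)
      = ((2:ℝ) ^ (2*k+1 + 1) - 1) * |bernNum (2*k+1 + 1)| / ((2:ℝ) ^ (2*k+1 - 1) * ((2*k+1:ℕ)+1 : ℝ)) := by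
    rw [htot]
    have hb : bernNum (2*k+1+1) = B := rfl
    rw [hb, show 2*k+1-1 = 2*k from rfl, show 2*k+1+1 = 2*k+2 from rfl]
    have h1 : (2:ℝ)^(2*k+2) ≠ 0 := by positivity
    have h2 : (2:ℝ)^(2*k) ≠ 0 := by positivity
    have h3 : ((2*k+1:ℕ):ℝ)+1 ≠ 0 := by positivity
    have hp3 : (2:ℝ)^(2*k+3) = 2^(2*k) * 8 := by rw [pow_add]; norm_num
    have hp2 : (2:ℝ)^(2*k+2) = 2^(2*k) * 4 := by rw [pow_add]; norm_num
    field_simp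
    rw [hp3, hp2]
    ring
  constructor
  · exact hfinal
  · have hfac : (0:ℝ) < ((2*k+1).factorial : ℝ) := by positivity
    have : (∫ x in (0:ℝ)..1, |bernPoly (2*k+1) x / ((2*k+1).factorial : ℝ)|)
        = (∫ x in (0:ℝ)..1, |bernPoly (2*k+1) x|) / ((2*k+1).factorial : ℝ) := by
      rw [← intervalIntegral.integral_div]
      congr 1
      funext x
      rw [abs_div, Nat.abs_cast]
    rw [this, hfinal, div_div]
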